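/- Let $I \subset [0,1]$ and $J \subset \mathbb{R}_{>0}$ both satisfy the DCC, and let $(c_i)$ be a nondecreasing sequence of positive reals. Then the set $K = I \cup \{ c_i \alpha \in [0,1] \mid i \in \mathbb{Z}_{>0},\ \alpha \in J \} \cup \{ \beta + c_i \gamma \in [0,1] \mid i \in \mathbb{Z}_{>0},\ \beta \in I,\ \gamma \in J \} \cup \{1\}$ satisfies the DCC. -/

import Mathlib

def SatisfiesDCC (S : Set ℝ) : Prop :=
  ¬ ∃ f : ℕ → ℝ, (∀ n, f n ∈ S) ∧ ∀ n, f (n + 1) < f n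

def SatisfiesACC (S : Set ℝ) : Prop :=
  ¬ ∃ f : ℕ → ℝ, (∀ n, f n ∈ S) ∧ ∀ n, f n < f (n + 1)

def IPlus (I : Set ℝ) : Set ℝ :=
  {0} ∪ {j | j ∈ Set.Icc (0 : ℝ) 1 ∧
    ∃ l : List ℝ, l ≠ [] ∧ (∀ x ∈ l, x ∈ I) ∧ l.sum = j}

def DSet (I : Set ℝ) : Set ℝ :=
  {a | ∃ m : ℕ, 0 < m ∧ ∃ f ∈ IPlus I, a = (m - 1 + f) / m}

lemma dcc_iff_isWF (S : Set ℝ) : SatisfiesDCC S ↔ S.IsWF := by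
  rw [Set.isWF_iff_no_descending_seq]
  constructor
  · intro h f hf hmem
    exact h ⟨f, hmem, fun n => hf (Nat.lt_succ_self n)⟩
  · rintro h ⟨f, hmem, hdec⟩
    exact h f (strictAnti_nat_of_succ_lt hdec) hmem

lemma dcc_iff_isPWO (S : Set ℝ) : SatisfiesDCC S ↔ S.IsPWO := by
  rw [dcc_iff_isWF, ← Set.isPWO_iff_isWF]

theorem dcc_auxiliary_set (I J : Set ℝ) (hI : I ⊆ Set.Icc 0 1)
    (hJ : J ⊆ Set.Ioi 0) (hIdcc : SatisfiesDCC I) (hJdcc : SatisfiesDCC J)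
    (c : ℕ → ℝ) (hc : Monotone c) (hcpos : ∀ i, 0 < c i) :
    SatisfiesDCC (I ∪
      {x ∈ Set.Icc (0 : ℝ) 1 | ∃ i : ℕ, ∃ α ∈ J, x = c i * α} ∪
      {x ∈ Set.Icc (0 : ℝ) 1 | ∃ i : ℕ, ∃ β ∈ I, ∃ γ ∈ J, x = β + c i * γ} ∪
      {1}) := by
  rw [dcc_iff_isPWO] at *
  have hC : (Set.range c).IsPWO := by
    have : (Set.univ : Set ℕ).IsPWO := by
      rw [Set.isPWO_iff_isWF]
      exact (Nat.lt_wfRel.wf).wellFoundedOn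
    simpa [Set.image_univ] using this.image_of_monotone hc
  have hS1 : ({x ∈ Set.Icc (0 : ℝ) 1 | ∃ i : ℕ, ∃ α ∈ J, x = c i * α}).IsPWO := by
    have hprod := hC.prod hJdcc
    have him := hprod.image_of_monotoneOn (f := fun p : ℝ × ℝ => p.1 * p.2) ?mono
    · refine him.mono ?_
      rintro x ⟨-, i, α, hα, rfl⟩
      exact ⟨(c i, α), ⟨⟨i, rfl⟩, hα⟩, rfl⟩
    case mono =>
      rintro ⟨a, b⟩ ⟨⟨i, rfl⟩, hb⟩ ⟨a', b'⟩ ⟨⟨i', rfl⟩, hb'⟩ ⟨h1, h2⟩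
      exact mul_le_mul h1 h2 (hJ hb).le (hcpos i').le
  have hS2 : ({x ∈ Set.Icc (0 : ℝ) 1 | ∃ i : ℕ, ∃ β ∈ I, ∃ γ ∈ J, x = β + c i * γ}).IsPWO := by
    have hprod := hIdcc.prod (hC.prod hJdcc)
    have him := hprod.image_of_monotoneOn (f := fun p : ℝ × ℝ × ℝ => p.1 + p.2.1 * p.2.2) ?mono
    · refine him.mono ?_
      rintro x ⟨-, i, β, hβ, γ, hγ, rfl⟩
      exact ⟨(β, c i, γ), ⟨hβ, ⟨i, rfl⟩, hγ⟩, rfl⟩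
    case mono =>
      rintro ⟨a, b, d⟩ ⟨ha, ⟨i, rfl⟩, hd⟩ ⟨a', b', d'⟩ ⟨ha', ⟨i', rfl⟩, hd'⟩ ⟨h1, h2, h3⟩
      exact add_le_add h1 (mul_le_mul h2 h3 (hJ hd).le (hcpos i').le)
  exact ((hIdcc.union hS1).union hS2).union (Set.isPWO_singleton 1)
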